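/- Let ρ > 0, let T, A ∈ B(H) admit unitary ρ-dilations U_T, U_A on a common space K ⊇ H, and let (xₙ) be a sequence of unit vectors in H. Then for every n, |⟨U_T xₙ, U_A xₙ⟩| ≤ (1/ρ²)|⟨Txₙ, Axₙ⟩| + √(1 − ‖Txₙ‖²/ρ²)·√(1 − ‖Axₙ‖²/ρ²). -/

import Mathlib

/-- Key estimate for unitary `ρ`-dilations: the inner products of the dilations are
controlled by those of the original operators plus defect terms. -/
theorem inner_dilation_estimate
    {K : Type*} [NormedAddCommGroup K] [InnerProductSpace ℂ K] [CompleteSpace K]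
    (p : Submodule ℂ K) [CompleteSpace p]
    (ρ : ℝ) (hρ : 0 < ρ)
    (T A : p →L[ℂ] p) (UT UA : K →L[ℂ] K)
    (hUT : UT ∈ unitary (K →L[ℂ] K)) (hUA : UA ∈ unitary (K →L[ℂ] K))
    (hdilT : ∀ x : p, T x = (ρ : ℂ) • Submodule.orthogonalProjection p (UT (x : K)))
    (hdilA : ∀ x : p, A x = (ρ : ℂ) • Submodule.orthogonalProjection p (UA (x : K)))
    (x : ℕ → p) (hx : ∀ n, ‖x n‖ = 1) :
    ∀ n, ‖(inner ℂ (UT ((x n : K))) (UA ((x n : K))) : ℂ)‖ ≤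
      (1 / ρ ^ 2) * ‖(inner ℂ (T (x n)) (A (x n)) : ℂ)‖ +
        Real.sqrt (1 - ‖T (x n)‖ ^ 2 / ρ ^ 2) * Real.sqrt (1 - ‖A (x n)‖ ^ 2 / ρ ^ 2) := by
  intro n
  set u : K := UT (x n : K) with hu_def
  set v : K := UA (x n : K) with hv_def
  set Pu : K := (Submodule.orthogonalProjection p u : K) with hPu_def
  set Pv : K := (Submodule.orthogonalProjection p v : K) with hPv_def
  have hu1 : ‖u‖ = 1 := by
    rw [hu_def, UT.norm_map_of_mem_unitary hUT]
    simpa using hx n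
  have hv1 : ‖v‖ = 1 := by
    rw [hv_def, UA.norm_map_of_mem_unitary hUA]
    simpa using hx n
  have hTu : (T (x n) : K) = (ρ : ℂ) • Pu := by
    rw [hdilT (x n)]; simp [hPu_def, hu_def]
  have hAv : (A (x n) : K) = (ρ : ℂ) • Pv := by
    rw [hdilA (x n)]; simp [hPv_def, hv_def]
  -- norms of projections
  have hnormT : ‖T (x n)‖ = ρ * ‖Pu‖ := by
    have : ‖T (x n)‖ = ‖(T (x n) : K)‖ := rfl
    rw [this, hTu, norm_smul]
    simp [abs_of_pos hρ]
  have hnormA : ‖A (x n)‖ = ρ * ‖Pv‖ := by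
    have : ‖A (x n)‖ = ‖(A (x n) : K)‖ := rfl
    rw [this, hAv, norm_smul]
    simp [abs_of_pos hρ]
  -- pythagoras: ‖u‖² = ‖Pu‖² + ‖u - Pu‖²
  have pyth : ∀ w : K, ‖w‖ ^ 2 =
      ‖(Submodule.orthogonalProjection p w : K)‖ ^ 2 + ‖w - (Submodule.orthogonalProjection p w : K)‖ ^ 2 := by
    intro w
    have horth : (inner ℂ ((Submodule.orthogonalProjection p w : K))
        (w - (Submodule.orthogonalProjection p w : K)) : ℂ) = 0 :=
      Submodule.inner_right_of_mem_orthogonal (Submodule.orthogonalProjection p w).2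
        (p.sub_starProjection_mem_orthogonal w)
    have h := norm_add_sq_eq_norm_sq_add_norm_sq_of_inner_eq_zero _ _ horth
    rw [add_sub_cancel] at h
    rw [pow_two, pow_two, pow_two]
    exact h
  have hρ2 : (0:ℝ) < ρ ^ 2 := by positivity
  have hQu : ‖u - Pu‖ ^ 2 = 1 - ‖T (x n)‖ ^ 2 / ρ ^ 2 := by
    have := pyth u
    rw [hu1, ← hPu_def] at this
    rw [hnormT, mul_pow]
    field_simp
    linarith
  have hQv : ‖v - Pv‖ ^ 2 = 1 - ‖A (x n)‖ ^ 2 / ρ ^ 2 := by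
    have := pyth v
    rw [hv1, ← hPv_def] at this
    rw [hnormA, mul_pow]
    field_simp
    linarith
  -- inner product decomposition
  have key : (inner ℂ u v : ℂ) = inner ℂ Pu Pv + inner ℂ (u - Pu) (v - Pv) := by
    have h1 : (inner ℂ Pu (v - Pv) : ℂ) = 0 :=
      Submodule.inner_right_of_mem_orthogonal (Submodule.orthogonalProjection p u).2
        (p.sub_starProjection_mem_orthogonal v)
    have h2 : (inner ℂ (u - Pu) Pv : ℂ) = 0 :=
      Submodule.inner_left_of_mem_orthogonal (Submodule.orthogonalProjection p v).2
        (p.sub_starProjection_mem_orthogonal u)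
    calc (inner ℂ u v : ℂ) = inner ℂ (Pu + (u - Pu)) (Pv + (v - Pv)) := by
          rw [add_sub_cancel Pu u, add_sub_cancel Pv v]
      _ = inner ℂ Pu Pv + inner ℂ (u - Pu) (v - Pv) := by
          rw [inner_add_left, inner_add_right, inner_add_right, h1, h2]
          ring
  have hinnerTA : ‖(inner ℂ (T (x n)) (A (x n)) : ℂ)‖ = ρ ^ 2 * ‖(inner ℂ Pu Pv : ℂ)‖ := by
    have : (inner ℂ (T (x n)) (A (x n)) : ℂ) = inner ℂ ((T (x n)) : K) ((A (x n)) : K) := rfl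
    rw [this, hTu, hAv, inner_smul_left, inner_smul_right]
    rw [norm_mul, norm_mul]
    simp [Complex.norm_real, abs_of_pos hρ, sq]
    ring
  have hCS : ‖(inner ℂ (u - Pu) (v - Pv) : ℂ)‖ ≤ ‖u - Pu‖ * ‖v - Pv‖ := norm_inner_le_norm _ _
  have hsq1 : ‖u - Pu‖ = Real.sqrt (1 - ‖T (x n)‖ ^ 2 / ρ ^ 2) := by
    rw [← hQu, Real.sqrt_sq (norm_nonneg _)]
  have hsq2 : ‖v - Pv‖ = Real.sqrt (1 - ‖A (x n)‖ ^ 2 / ρ ^ 2) := by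
    rw [← hQv, Real.sqrt_sq (norm_nonneg _)]
  calc ‖(inner ℂ u v : ℂ)‖ ≤ ‖(inner ℂ Pu Pv : ℂ)‖ + ‖(inner ℂ (u - Pu) (v - Pv) : ℂ)‖ := by
        rw [key]; exact norm_add_le _ _
    _ ≤ (1 / ρ ^ 2) * ‖(inner ℂ (T (x n)) (A (x n)) : ℂ)‖ +
        Real.sqrt (1 - ‖T (x n)‖ ^ 2 / ρ ^ 2) * Real.sqrt (1 - ‖A (x n)‖ ^ 2 / ρ ^ 2) := by
        rw [hinnerTA, ← hsq1, ← hsq2]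
        have : 1 / ρ ^ 2 * (ρ ^ 2 * ‖(inner ℂ Pu Pv : ℂ)‖) = ‖(inner ℂ Pu Pv : ℂ)‖ := by
          field_simp
        rw [this]
        exact add_le_add_right hCS _
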